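/- Let N be an n×n real symmetric positive definite matrix whose off-diagonal entries are all nonpositive, and let P be an n×n nonnegative diagonal matrix. Then entrywise 0 ≤ ((N + P)^{-1})_{ij} ≤ (N^{-1})_{ij} for all i, j. -/

import Mathlib

open Matrix Finset

lemma inv_entry_nonneg_aux {n : ℕ} (N : Matrix (Fin n) (Fin n) ℝ) (hN : N.PosDef)
    (hoff : ∀ i j : Fin n, i ≠ j → N i j ≤ 0) :
    ∀ i j : Fin n, 0 ≤ N⁻¹ i j := by
  intro i j
  set x : Fin n → ℝ := fun k => N⁻¹ k j with hxdef
  set y : Fin n → ℝ := fun k => |x k| with hydef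
  have hdet : IsUnit N.det := hN.det_pos.ne'.isUnit
  have hNN : N * N⁻¹ = 1 := Matrix.mul_nonsing_inv N hdet
  have hNx : N *ᵥ x = fun k => if k = j then 1 else 0 := by
    funext k
    have : (N * N⁻¹) k j = (1 : Matrix (Fin n) (Fin n) ℝ) k j := by rw [hNN]
    simpa [Matrix.mul_apply, Matrix.one_apply, mulVec, dotProduct, hxdef] using this
  have hsym : ∀ a b : Fin n, N a b = N b a := by
    intro a b
    have := hN.isHermitian
    have h := congrFun (congrFun this.symm a) b
    simpa [Matrix.conjTranspose_apply] using h
  -- quadratic form as double sum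
  have hquad2 : ∀ u v : Fin n → ℝ, u ⬝ᵥ (N *ᵥ v) = ∑ a, ∑ b, N a b * (u a * v b) := by
    intro u v
    simp only [dotProduct, mulVec, dotProduct, Finset.mul_sum]
    exact Finset.sum_congr rfl fun a _ => Finset.sum_congr rfl fun b _ => by ring
  have hquad : ∀ u : Fin n → ℝ, u ⬝ᵥ (N *ᵥ u) = ∑ a, ∑ b, N a b * (u a * u b) :=
    fun u => hquad2 u u
  have hyy_le : y ⬝ᵥ (N *ᵥ y) ≤ x ⬝ᵥ (N *ᵥ x) := by
    rw [hquad, hquad]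
    refine Finset.sum_le_sum fun a _ => Finset.sum_le_sum fun b _ => ?_
    rcases eq_or_ne a b with rfl | hab
    · simp [hydef, abs_mul_abs_self]
    · have h1 : N a b ≤ 0 := hoff a b hab
      have h2 : x a * x b ≤ y a * y b := by
        rw [hydef]; simpa [abs_mul] using le_abs_self (x a * x b)
      exact mul_le_mul_of_nonpos_left h2 h1
  have hxNx : x ⬝ᵥ (N *ᵥ x) = x j := by rw [hNx]; simp [dotProduct]
  have hyNx : y ⬝ᵥ (N *ᵥ x) = y j := by rw [hNx]; simp [dotProduct]
  have hxNy : x ⬝ᵥ (N *ᵥ y) = y j := by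
    have : x ⬝ᵥ (N *ᵥ y) = y ⬝ᵥ (N *ᵥ x) := by
      rw [hquad2, hquad2, Finset.sum_comm]
      exact Finset.sum_congr rfl fun a _ => Finset.sum_congr rfl fun b _ => by
        rw [hsym a b]; ring
    rw [this, hyNx]
  have hd : (y - x) ⬝ᵥ (N *ᵥ (y - x)) ≤ 0 := by
    have hexp : (y - x) ⬝ᵥ (N *ᵥ (y - x))
        = y ⬝ᵥ (N *ᵥ y) - y ⬝ᵥ (N *ᵥ x) - x ⬝ᵥ (N *ᵥ y) + x ⬝ᵥ (N *ᵥ x) := by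
      simp [Matrix.mulVec_sub, sub_dotProduct, dotProduct_sub]
      ring
    have hxj_le : x j ≤ y j := le_abs_self _
    rw [hexp, hyNx, hxNy, hxNx]
    nlinarith [hyy_le]
  have hyx : y = x := by
    by_contra h
    have hne : y - x ≠ 0 := sub_ne_zero.mpr h
    have := hN.dotProduct_mulVec_pos hne
    simp only [star_trivial] at this
    linarith
  have hyi : y i = x i := congrFun hyx i
  calc (0:ℝ) ≤ |x i| := abs_nonneg _
    _ = y i := rfl
    _ = x i := hyi
    _ = N⁻¹ i j := rfl

/-- Let `N` be an `n×n` real symmetric positive definite matrix with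
nonpositive off-diagonal entries, and `P` a nonnegative diagonal matrix. Then entrywise
`0 ≤ ((N + P)⁻¹)_{ij} ≤ (N⁻¹)_{ij}` for all `i, j`. -/
theorem inv_entrywise_monotone {n : ℕ}
    (N : Matrix (Fin n) (Fin n) ℝ) (hN : N.PosDef)
    (hoff : ∀ i j : Fin n, i ≠ j → N i j ≤ 0)
    (p : Fin n → ℝ) (hp : ∀ i, 0 ≤ p i) :
    ∀ i j : Fin n, 0 ≤ (N + diagonal p)⁻¹ i j ∧ (N + diagonal p)⁻¹ i j ≤ N⁻¹ i j := by
  have hPsd : (diagonal p).PosSemidef := Matrix.posSemidef_diagonal_iff.mpr hp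
  have hM : (N + diagonal p).PosDef := hN.add_posSemidef hPsd
  have hMoff : ∀ i j : Fin n, i ≠ j → (N + diagonal p) i j ≤ 0 := by
    intro i j hij
    simpa [Matrix.diagonal_apply_ne _ hij] using hoff i j hij
  have hMinv := inv_entry_nonneg_aux _ hM hMoff
  have hNinv := inv_entry_nonneg_aux _ hN hoff
  intro i j
  refine ⟨hMinv i j, ?_⟩
  have hdetN : IsUnit N.det := hN.det_pos.ne'.isUnit
  have hdetM : IsUnit (N + diagonal p).det := hM.det_pos.ne'.isUnit
  have key : N⁻¹ - (N + diagonal p)⁻¹ = N⁻¹ * diagonal p * (N + diagonal p)⁻¹ := by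
    have h1 : N⁻¹ * (N + diagonal p) * (N + diagonal p)⁻¹ = N⁻¹ := by
      rw [Matrix.mul_assoc, Matrix.mul_nonsing_inv _ hdetM, Matrix.mul_one]
    calc N⁻¹ - (N + diagonal p)⁻¹
        = N⁻¹ * (N + diagonal p) * (N + diagonal p)⁻¹ - N⁻¹ * N * (N + diagonal p)⁻¹ := by
          rw [h1, Matrix.nonsing_inv_mul _ hdetN, Matrix.one_mul]
      _ = N⁻¹ * diagonal p * (N + diagonal p)⁻¹ := by
          rw [← Matrix.sub_mul, ← Matrix.mul_sub]; congr 2; abel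
  have hentry : N⁻¹ i j - (N + diagonal p)⁻¹ i j
      = ∑ k, N⁻¹ i k * p k * (N + diagonal p)⁻¹ k j := by
    have h := congrFun (congrFun key i) j
    rw [Matrix.sub_apply] at h
    rw [h, Matrix.mul_apply]
    simp only [Matrix.mul_diagonal]
  have hnn : 0 ≤ ∑ k, N⁻¹ i k * p k * (N + diagonal p)⁻¹ k j :=
    Finset.sum_nonneg fun k _ =>
      mul_nonneg (mul_nonneg (hNinv i k) (hp k)) (hMinv k j)
  linarith [hentry ▸ hnn]
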